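/- (Stackelberg, interior-minimum case, Case 3 of Theorem 2.) Suppose (ln τ)·(k0 − k1) < 0 and k0 + k1 < 0, and set d* = √(2·(ln τ)·(k0 − k1)/(k0 + k1)) (which is a positive real). Then r is strictly decreasing on (0, d*] and strictly increasing on [d*, ∞); consequently d* is the unique global minimizer of r on (0, ∞). -/

import Mathlib

/-- The Gaussian Q-function `Q(x) = (1/√(2π)) ∫_x^∞ exp(−t²/2) dt`. -/
noncomputable def gaussQ (x : ℝ) : ℝ :=
  (Real.sqrt (2 * Real.pi))⁻¹ * ∫ t in Set.Ioi x, Real.exp (-(t ^ 2 / 2))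

open MeasureTheory Real Set

lemma gauss_integrable : Integrable (fun t : ℝ => Real.exp (-(t ^ 2 / 2))) := by
  have := integrable_exp_neg_mul_sq (by norm_num : (0:ℝ) < 1/2)
  convert this using 2 with t
  ring_nf

lemma gauss_cont : Continuous (fun t : ℝ => Real.exp (-(t ^ 2 / 2))) := by
  continuity

lemma gaussQ_hasDerivAt (x : ℝ) :
    HasDerivAt gaussQ (-((Real.sqrt (2 * Real.pi))⁻¹ * Real.exp (-(x ^ 2 / 2)))) x := by
  set f : ℝ → ℝ := fun t => Real.exp (-(t ^ 2 / 2)) with hf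
  have hint := gauss_integrable
  have key : ∀ y : ℝ, gaussQ y =
      (Real.sqrt (2 * Real.pi))⁻¹ * ((∫ t, f t) - (∫ t in Set.Iic (0:ℝ), f t) - ∫ t in (0:ℝ)..y, f t) := by
    intro y
    rw [gaussQ]
    congr 1
    have h1 : (∫ t in Set.Iic y, f t) + (∫ t in Set.Ioi y, f t) = ∫ t, f t :=
      intervalIntegral.integral_Iic_add_Ioi hint.integrableOn hint.integrableOn
    have h2 : (∫ t in Set.Iic y, f t) - (∫ t in Set.Iic (0:ℝ), f t) = ∫ t in (0:ℝ)..y, f t :=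
      intervalIntegral.integral_Iic_sub_Iic hint.integrableOn hint.integrableOn
    linarith
  have hd : HasDerivAt (fun y => (∫ t in (0:ℝ)..y, f t)) (f x) x :=
    (gauss_cont.integral_hasStrictDerivAt 0 x).hasDerivAt
  have : HasDerivAt (fun y => (Real.sqrt (2 * Real.pi))⁻¹ *
      ((∫ t, f t) - (∫ t in Set.Iic (0:ℝ), f t) - ∫ t in (0:ℝ)..y, f t))
      ((Real.sqrt (2 * Real.pi))⁻¹ * (0 - 0 - f x)) x :=
    (((hasDerivAt_const x _).sub (hasDerivAt_const x _)).sub hd).const_mul _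
  refine HasDerivAt.congr_of_eventuallyEq ?_ (Filter.Eventually.of_forall key)
  exact this.congr_deriv (by simp only [hf]; ring)



/-- Stackelberg, interior-minimum case (Case 3 of Theorem 2): if
`(ln τ)·(k0 − k1) < 0` and `k0 + k1 < 0`, the transmitter Bayes risk is strictly
decreasing on `(0, d*]` and strictly increasing on `[d*, ∞)`, where
`d* = √(2·(ln τ)·(k0 − k1)/(k0 + k1))`; hence `d*` is the unique global
minimizer on `(0, ∞)`. -/

theorem stmt_9 (π0 π1 C00 C01 C10 C11 τ ζ : ℝ)
    (hπ0 : 0 < π0) (hπ1 : 0 < π1) (hτ : 0 < τ) (hζ : ζ = 1 ∨ ζ = -1)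
    (k0 k1 : ℝ)
    (hk0 : k0 = π0 * ζ * (C10 - C00) * τ ^ (-(1 / 2) : ℝ))
    (hk1 : k1 = π1 * ζ * (C01 - C11) * τ ^ ((1 / 2) : ℝ))
    (r : ℝ → ℝ)
    (hr : r = fun d : ℝ => π0 * C00 + π1 * C11
        + π0 * (C10 - C00) * gaussQ (ζ * (Real.log τ / d + d / 2))
        + π1 * (C01 - C11) * gaussQ (ζ * (-Real.log τ / d + d / 2)))
    (hcase1 : Real.log τ * (k0 - k1) < 0) (hcase2 : k0 + k1 < 0)
    (dstar : ℝ)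
    (hdstar : dstar = Real.sqrt (2 * Real.log τ * (k0 - k1) / (k0 + k1))) :
    0 < dstar ∧
    StrictAntiOn r (Set.Ioc (0 : ℝ) dstar) ∧
    StrictMonoOn r (Set.Ici dstar) ∧
    (∀ d : ℝ, 0 < d → d ≠ dstar → r dstar < r d) := by
  have _ := hπ0
  have _ := hπ1
  have hζ2 : ζ ^ 2 = 1 := by rcases hζ with h | h <;> rw [h] <;> norm_num
  set L := Real.log τ with hL
  have hb1 : τ ^ ((1/2):ℝ) = Real.exp (L / 2) := by
    rw [Real.rpow_def_of_pos hτ, hL]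
    congr 1; ring
  have hb0 : τ ^ (-(1/2):ℝ) = (Real.exp (L / 2))⁻¹ := by
    rw [Real.rpow_def_of_pos hτ, ← Real.exp_neg, hL]
    congr 1; ring
  set b := Real.exp (L / 2) with hbdef
  rw [hb0] at hk0
  rw [hb1] at hk1
  have hbpos : 0 < b := Real.exp_pos _
  have hbne : b ≠ 0 := ne_of_gt hbpos
  have hQpos : 0 < 2 * L * (k0 - k1) / (k0 + k1) :=
    div_pos_of_neg_of_neg (by linarith) hcase2
  have hdspos : 0 < dstar := hdstar ▸ Real.sqrt_pos.mpr hQpos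
  have hds2 : dstar ^ 2 = 2 * L * (k0 - k1) / (k0 + k1) := by
    rw [hdstar]; exact Real.sq_sqrt hQpos.le
  have hcpos : 0 < (Real.sqrt (2 * Real.pi))⁻¹ :=
    inv_pos.mpr (Real.sqrt_pos.mpr (by positivity))
  have hne : k0 + k1 ≠ 0 := ne_of_lt hcase2
  -- derivative of r
  have hderiv : ∀ d : ℝ, 0 < d → HasDerivAt r
      ((-(k0 + k1)) * ((Real.sqrt (2 * Real.pi))⁻¹ *
          Real.exp (-(L ^ 2 / (2 * d ^ 2) + d ^ 2 / 8))) / (2 * d ^ 2)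
        * (d ^ 2 - dstar ^ 2)) d := by
    intro d hd
    have hdne : d ≠ 0 := ne_of_gt hd
    have h1 : HasDerivAt (fun x : ℝ => ζ * (L / x + x / 2)) (ζ * (-L / d ^ 2 + 1 / 2)) d := by
      have ha := (hasDerivAt_const d L).div (hasDerivAt_id d) hdne
      have hb' := (hasDerivAt_id d).div_const 2
      have := (ha.add hb').const_mul ζ
      exact this.congr_deriv (by simp only [id]; ring)
    have h2 : HasDerivAt (fun x : ℝ => ζ * (-L / x + x / 2)) (ζ * (L / d ^ 2 + 1 / 2)) d := by
      have ha := (hasDerivAt_const d (-L)).div (hasDerivAt_id d) hdne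
      have hb' := (hasDerivAt_id d).div_const 2
      have := (ha.add hb').const_mul ζ
      exact this.congr_deriv (by simp only [id]; ring)
    have hQ1 := (gaussQ_hasDerivAt (ζ * (L / d + d / 2))).comp d h1
    have hQ2 := (gaussQ_hasDerivAt (ζ * (-L / d + d / 2))).comp d h2
    have hr' : HasDerivAt r
        (0 + π0 * (C10 - C00) *
            (-((Real.sqrt (2 * Real.pi))⁻¹ *
                Real.exp (-((ζ * (L / d + d / 2)) ^ 2 / 2))) * (ζ * (-L / d ^ 2 + 1 / 2)))
          + π1 * (C01 - C11) *
            (-((Real.sqrt (2 * Real.pi))⁻¹ *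
                Real.exp (-((ζ * (-L / d + d / 2)) ^ 2 / 2))) * (ζ * (L / d ^ 2 + 1 / 2)))) d := by
      rw [hr]
      exact ((hasDerivAt_const d (π0 * C00 + π1 * C11)).add
        (hQ1.const_mul (π0 * (C10 - C00)))).add (hQ2.const_mul (π1 * (C01 - C11)))
    have hE1 : Real.exp (-((ζ * (L / d + d / 2)) ^ 2 / 2))
        = Real.exp (-(L ^ 2 / (2 * d ^ 2) + d ^ 2 / 8)) * b⁻¹ := by
      rw [hbdef, ← Real.exp_neg, ← Real.exp_add]
      congr 1
      have h : (ζ * (L / d + d / 2)) ^ 2 = (L / d + d / 2) ^ 2 := by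
        rw [mul_pow, hζ2, one_mul]
      rw [h]
      field_simp
      ring
    have hE2 : Real.exp (-((ζ * (-L / d + d / 2)) ^ 2 / 2))
        = Real.exp (-(L ^ 2 / (2 * d ^ 2) + d ^ 2 / 8)) * b := by
      rw [hbdef, ← Real.exp_add]
      congr 1
      have h : (ζ * (-L / d + d / 2)) ^ 2 = (-L / d + d / 2) ^ 2 := by
        rw [mul_pow, hζ2, one_mul]
      rw [h]
      field_simp
      ring
    have hA : π0 * (C10 - C00) *
        (-((Real.sqrt (2 * Real.pi))⁻¹ *
            (Real.exp (-(L ^ 2 / (2 * d ^ 2) + d ^ 2 / 8)) * b⁻¹)) * (ζ * (-L / d ^ 2 + 1 / 2)))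
        = -((Real.sqrt (2 * Real.pi))⁻¹ * Real.exp (-(L ^ 2 / (2 * d ^ 2) + d ^ 2 / 8)))
          * (k0 * (-L / d ^ 2 + 1 / 2)) := by
      rw [hk0]; ring
    have hB : π1 * (C01 - C11) *
        (-((Real.sqrt (2 * Real.pi))⁻¹ *
            (Real.exp (-(L ^ 2 / (2 * d ^ 2) + d ^ 2 / 8)) * b)) * (ζ * (L / d ^ 2 + 1 / 2)))
        = -((Real.sqrt (2 * Real.pi))⁻¹ * Real.exp (-(L ^ 2 / (2 * d ^ 2) + d ^ 2 / 8)))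
          * (k1 * (L / d ^ 2 + 1 / 2)) := by
      rw [hk1]; ring
    convert hr' using 1
    rw [hE1, hE2, hA, hB, hds2]
    field_simp
    ring
  have hcont : ∀ d : ℝ, 0 < d → ContinuousAt r d := fun d hd => (hderiv d hd).continuousAt
  have hanti : StrictAntiOn r (Set.Ioc (0 : ℝ) dstar) := by
    apply strictAntiOn_of_deriv_neg (convex_Ioc _ _)
    · exact fun x hx => (hcont x hx.1).continuousWithinAt
    · intro x hx
      rw [interior_Ioc] at hx
      rw [(hderiv x hx.1).deriv]
      apply mul_neg_of_pos_of_neg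
      · apply div_pos (mul_pos (by linarith) (mul_pos hcpos (Real.exp_pos _)))
        have hxne : x ≠ 0 := ne_of_gt hx.1
        positivity
      · nlinarith [hx.1, hx.2]
  have hmono : StrictMonoOn r (Set.Ici dstar) := by
    apply strictMonoOn_of_deriv_pos (convex_Ici _)
    · exact fun x hx => (hcont x (lt_of_lt_of_le hdspos hx)).continuousWithinAt
    · intro x hx
      rw [interior_Ici] at hx
      rw [(hderiv x (lt_trans hdspos hx)).deriv]
      apply mul_pos
      · apply div_pos (mul_pos (by linarith) (mul_pos hcpos (Real.exp_pos _)))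
        have hxne : x ≠ 0 := ne_of_gt (lt_trans hdspos hx)
        positivity
      · nlinarith [hdspos, Set.mem_Ioi.mp hx]
  refine ⟨hdspos, hanti, hmono, ?_⟩
  intro d hd hned
  rcases lt_or_gt_of_ne hned with h | h
  · exact hanti ⟨hd, h.le⟩ ⟨hdspos, le_refl _⟩ h
  · exact hmono Set.self_mem_Ici (Set.mem_Ici.mpr h.le) h
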